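/- Let G = (V,E) be a distributed computing network, let s,t ∈ V, and let S ⊆ E ∪ V be a joint communication and computation cut for (s,t), i.e., every computation path (P,w) from s to t either uses some link in S ∩ E or has its computation node w ∈ S ∩ V. Then in the layered graph of G, after deleting the edge set S' = {(u,v), (u',v') : (u,v) ∈ S ∩ E} ∪ {(w,w') : w ∈ S ∩ V}, there is no directed path from s (in the upper layer) to t' (the lower-layer copy of t). -/

import Mathlib

open Finset

variable {V : Type} [Fintype V] [DecidableEq V]

/-- A computation path from `s` to `t` in the directed graph with link set `E`:
a directed walk (a nonempty list of nodes whose consecutive pairs are links of `E`)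
starting at `s` and ending at `t`, together with a designated processing node `proc`
lying on the walk. -/
structure CompPath (E : Finset (V × V)) (s t : V) : Type where
  walk : List V
  proc : V
  walk_ne : walk ≠ []
  head_eq : walk.head? = some s
  last_eq : walk.getLast? = some t
  chain : walk.Chain' fun u v => (u, v) ∈ E
  proc_mem : proc ∈ walk

namespace CompPath

/-- The list of links traversed by a computation path, with multiplicity. -/
def links {E : Finset (V × V)} {s t : V} (p : CompPath E s t) : List (V × V) :=
  p.walk.zip p.walk.tail

end CompPath

/-- `x` is a feasible `s`–`t` flow in the computing network `(E, μE, μV)`: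
a nonnegative, finitely supported assignment of values to computation paths such that
every link `e ∈ E` carries (with multiplicity) at most `μE e` total flow and every node
`w` processes at most `μV w` total flow. -/
def IsFlow (E : Finset (V × V)) (μE : V × V → ℝ) (μV : V → ℝ) (s t : V)
    (x : CompPath E s t →₀ ℝ) : Prop :=
  (∀ p, 0 ≤ x p) ∧
  (∀ e ∈ E, ∑ p ∈ x.support, x p * (p.links.count e : ℝ) ≤ μE e) ∧
  (∀ w : V, ∑ p ∈ x.support, (if p.proc = w then x p else 0) ≤ μV w)

/-- The total value of a flow. -/
def flowValue (E : Finset (V × V)) (s t : V) (x : CompPath E s t →₀ ℝ) : ℝ :=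
  ∑ p ∈ x.support, x p

/-- The maximum `s`–`t` flow of the computing network `(E, μE, μV)`. -/
noncomputable def maxFlow (E : Finset (V × V)) (μE : V × V → ℝ) (μV : V → ℝ)
    (s t : V) : ℝ :=
  sSup {F | ∃ x, IsFlow E μE μV s t x ∧ F = flowValue E s t x}

/-- A communication cut for `(s, t)`: a set of links `Ec ⊆ E` such that every
computation path from `s` to `t` whose processing node has positive processing
capacity uses some link of `Ec`. -/
def IsCommCut (E : Finset (V × V)) (μV : V → ℝ) (s t : V) (Ec : Finset (V × V)) : Prop :=
  Ec ⊆ E ∧ ∀ p : CompPath E s t, 0 < μV p.proc → ∃ e ∈ Ec, e ∈ p.links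

/-- A computation cut for `(s, t)`: a set of nodes `Vc` such that every computation
path from `s` to `t` whose processing node has positive processing capacity has its
processing node in `Vc`. -/
def IsCompCut (E : Finset (V × V)) (μV : V → ℝ) (s t : V) (Vc : Finset V) : Prop :=
  ∀ p : CompPath E s t, 0 < μV p.proc → p.proc ∈ Vc

/-- A joint communication and computation cut for `(s, t)`. -/
def IsJointCut (E : Finset (V × V)) (μV : V → ℝ) (s t : V)
    (Ec : Finset (V × V)) (Vc : Finset V) : Prop :=
  Ec ⊆ E ∧
    ∀ p : CompPath E s t, 0 < μV p.proc → (∃ e ∈ Ec, e ∈ p.links) ∨ p.proc ∈ Vc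

/-- The value of a joint cut. -/
def jointCutValue (μE : V × V → ℝ) (μV : V → ℝ) (Ec : Finset (V × V)) (Vc : Finset V) : ℝ :=
  ∑ e ∈ Ec, μE e + ∑ w ∈ Vc, μV w

/-- The minimum value of a joint communication and computation cut for `(s, t)`. -/
noncomputable def minJointCutValue (E : Finset (V × V)) (μE : V × V → ℝ) (μV : V → ℝ)
    (s t : V) : ℝ :=
  sInf {c | ∃ Ec Vc, IsJointCut E μV s t Ec Vc ∧ c = jointCutValue μE μV Ec Vc}

/-- The edge set of the layered graph of `(V, E)`: a copy of each link in each of the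
two layers (`Sum.inl` is the upper layer, `Sum.inr` the lower layer), plus a crossing
edge `(w, w')` for each node `w`. -/
def layerEdges (E : Finset (V × V)) : Finset ((V ⊕ V) × (V ⊕ V)) :=
  (E.image fun e => (Sum.inl e.1, Sum.inl e.2)) ∪
    (E.image fun e => (Sum.inr e.1, Sum.inr e.2)) ∪
    ((univ : Finset V).image fun w => (Sum.inl w, Sum.inr w))

/-- `a` is connected to `b` by a directed path in the layered graph after deleting
the edge set `C`. -/
def LConnected (E : Finset (V × V)) (C : Finset ((V ⊕ V) × (V ⊕ V))) (a b : V ⊕ V) : Prop :=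
  Relation.ReflTransGen (fun u v => (u, v) ∈ layerEdges E \ C) a b

/-- Costs (capacities) of layered-graph edges: each of the two copies of a link
`(u, v)` gets cost `μE (u, v)`, and the crossing edge `(w, w')` gets cost `κ w`. -/
def lcost (μE : V × V → ℝ) (κ : V → ℝ) : (V ⊕ V) × (V ⊕ V) → ℝ
  | (Sum.inl u, Sum.inl v) => μE (u, v)
  | (Sum.inr u, Sum.inr v) => μE (u, v)
  | (Sum.inl u, Sum.inr v) => if u = v then κ u else 0
  | (Sum.inr _, Sum.inl _) => 0

/-- Reachability along directed links of `E`. -/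
def Reach (E : Finset (V × V)) (a b : V) : Prop :=
  Relation.ReflTransGen (fun u v => (u, v) ∈ E) a b

/-- If `(SE, SV)` is a joint communication and computation cut for
`(s, t)` (every computation path from `s` to `t` uses a link of `SE` or has its
computation node in `SV`), then deleting
`S' = {(u,v), (u',v') : (u,v) ∈ SE} ∪ {(w,w') : w ∈ SV}` from the layered graph
leaves no directed path from `s` (upper layer) to `t'` (lower layer). -/
theorem layered_cut_disconnects (E : Finset (V × V)) (μE : V × V → ℝ) (μV : V → ℝ)
    (hμE : ∀ e, 0 ≤ μE e) (hμV : ∀ w, 0 ≤ μV w) (s t : V)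
    (SE : Finset (V × V)) (SV : Finset V) (hSE : SE ⊆ E)
    (hcut : ∀ p : CompPath E s t, (∃ e ∈ SE, e ∈ p.links) ∨ p.proc ∈ SV) :
    ¬ LConnected E
        ((SE.image fun e => (Sum.inl e.1, Sum.inl e.2)) ∪
          (SE.image fun e => (Sum.inr e.1, Sum.inr e.2)) ∪
          (SV.image fun w => (Sum.inl w, Sum.inr w)))
        (Sum.inl s) (Sum.inr t) := by
  intro h
  set C := (SE.image fun e => (Sum.inl e.1, Sum.inl e.2)) ∪
      (SE.image fun e => (Sum.inr e.1, Sum.inr e.2)) ∪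
      (SV.image fun w => (Sum.inl w, Sum.inr w)) with hC
  -- Good a : existence of a suitable tail walk
  let Good : V ⊕ V → Prop := fun a =>
    ∃ walk : List V, walk ≠ [] ∧ walk.getLast? = some t ∧
      walk.Chain' (fun u v => (u, v) ∈ E) ∧
      (∀ e ∈ walk.zip walk.tail, e ∉ SE) ∧
      (match a with
        | Sum.inl v => walk.head? = some v ∧ ∃ w ∈ walk, w ∉ SV
        | Sum.inr v => walk.head? = some v)
  have key : ∀ a : V ⊕ V, LConnected E C a (Sum.inr t) → Good a := by
    intro a h
    induction h using Relation.ReflTransGen.head_induction_on with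
    | refl =>
      exact ⟨[t], by simp, by simp, List.isChain_singleton t, by simp, by simp⟩
    | @head x c h' _ ih =>
      obtain ⟨hmem, hnot⟩ := Finset.mem_sdiff.mp h'
      simp only [layerEdges, Finset.mem_union, Finset.mem_image, Finset.mem_univ] at hmem
      obtain ⟨walk, hne, hlast, hchain, hlinks, hrest⟩ := ih
      rcases hmem with (⟨⟨u, v⟩, huv, heq⟩ | ⟨⟨u, v⟩, huv, heq⟩) | ⟨w, _, heq⟩
      · -- upper layer edge
        injection heq with h1 h2
        subst h1; subst h2
        obtain ⟨hhead, pr, hprmem, hprnot⟩ := hrest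
        have huvS : (u, v) ∉ SE := by
          intro hmem2
          exact hnot (Finset.mem_union_left _ (Finset.mem_union_left _
            (Finset.mem_image.mpr ⟨(u, v), hmem2, rfl⟩)))
        refine ⟨u :: walk, by simp, ?_, ?_, ?_, by simp, pr, by simp [hprmem], hprnot⟩
        · rw [List.getLast?_cons, hlast]; simp
        · exact List.isChain_cons.mpr ⟨fun b hb => by
            rw [hhead] at hb; cases hb; exact huv, hchain⟩
        · intro e he
          rcases walk with _ | ⟨v0, rest⟩
          · simp at hne
          · have hv0 : v0 = v := by simpa using hhead
            simp only [List.zip_cons_cons, List.tail_cons, List.mem_cons] at he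
            rcases he with rfl | he
            · exact hv0 ▸ huvS
            · exact hlinks e (by simpa using he)
      · -- lower layer edge
        injection heq with h1 h2
        subst h1; subst h2
        have hhead : walk.head? = some v := hrest
        have huvS : (u, v) ∉ SE := by
          intro hmem2
          exact hnot (Finset.mem_union_left _ (Finset.mem_union_right _
            (Finset.mem_image.mpr ⟨(u, v), hmem2, rfl⟩)))
        refine ⟨u :: walk, by simp, ?_, ?_, ?_, ?_⟩
        · rw [List.getLast?_cons, hlast]; simp
        · exact List.isChain_cons.mpr ⟨fun b hb => by
            rw [hhead] at hb; cases hb; exact huv, hchain⟩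
        · intro e he
          rcases walk with _ | ⟨v0, rest⟩
          · simp at hne
          · have hv0 : v0 = v := by simpa using hhead
            simp only [List.zip_cons_cons, List.tail_cons, List.mem_cons] at he
            rcases he with rfl | he
            · exact hv0 ▸ huvS
            · exact hlinks e (by simpa using he)
        · simp
      · -- crossing edge
        injection heq with h1 h2
        subst h1; subst h2
        have hhead : walk.head? = some w := hrest
        have hwS : w ∉ SV := by
          intro hmem2
          exact hnot (Finset.mem_union_right _ (Finset.mem_image.mpr ⟨w, hmem2, rfl⟩))
        refine ⟨walk, hne, hlast, hchain, hlinks, hhead, w, ?_, hwS⟩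
        exact List.mem_of_mem_head? (by simpa [List.head?] using hhead)
  obtain ⟨walk, hne, hlast, hchain, hlinks, hhead, pr, hprmem, hprnot⟩ :=
    key (Sum.inl s) h
  let p : CompPath E s t :=
    ⟨walk, pr, hne, hhead, hlast, hchain, hprmem⟩
  rcases hcut p with ⟨e, heS, heL⟩ | hpr
  · exact hlinks e heL heS
  · exact hprnot hpr
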